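/- For every integer k ≥ 2, the diamond-necklace N_k, which has order n = 4k, satisfies F_t(N_k) = 2k = n/2. -/

import Mathlib

/-- A set `T` of (colored) vertices is closed under the forcing rule: whenever a colored
vertex `v ∈ T` has the property that all of its neighbors outside `T` are equal to `w`
(i.e. `w` is its unique non-colored neighbor, if `w ∉ T`), then `w ∈ T`. -/
def ForcingClosed {V : Type*} (G : SimpleGraph V) (T : Set V) : Prop :=
  ∀ v ∈ T, ∀ w, G.Adj v w → (∀ u, G.Adj v u → u ∉ T → u = w) → w ∈ T

/-- `S` is a (zero) forcing set of `G`: iterating the forcing process starting from `S`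
colors all vertices; equivalently, every forcing-closed superset of `S` is everything. -/
def IsForcingSet {V : Type*} (G : SimpleGraph V) (S : Set V) : Prop :=
  ∀ T : Set V, S ⊆ T → ForcingClosed G T → ∀ v, v ∈ T

/-- `S` is a total forcing set of `G`: a forcing set whose induced subgraph has no
isolated vertex. -/
def IsTotalForcingSet {V : Type*} (G : SimpleGraph V) (S : Set V) : Prop :=
  IsForcingSet G S ∧ ∀ v ∈ S, ∃ w ∈ S, G.Adj v w

/-- The forcing number `F(G)`: minimum cardinality of a forcing set. -/
noncomputable def forcingNumber {V : Type*} (G : SimpleGraph V) : ℕ :=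
  sInf {n : ℕ | ∃ S : Set V, IsForcingSet G S ∧ S.ncard = n}

/-- The total forcing number `F_t(G)`: minimum cardinality of a total forcing set. -/
noncomputable def totalForcingNumber {V : Type*} (G : SimpleGraph V) : ℕ :=
  sInf {n : ℕ | ∃ S : Set V, IsTotalForcingSet G S ∧ S.ncard = n}

/-- The diamond-necklace `N_k`.  Its vertices are pairs `(i, j)` with `i : Fin k`
indexing the diamond and `j : Fin 4` the position inside diamond `D_i`, where
`j = 0, 1, 2, 3` correspond to the vertices `a_i, b_i, c_i, d_i` respectively and
`a_i b_i` is the missing edge of the diamond.  Two vertices in the same diamond are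
adjacent unless they are `a_i` and `b_i`, and in addition `a_i` is joined to `b_{i+1}`
(indices modulo `k`). -/
def diamondNecklace (k : ℕ) : SimpleGraph (Fin k × Fin 4) :=
  SimpleGraph.fromRel (fun p q =>
    (p.1 = q.1 ∧ ¬ ((p.2 = 0 ∧ q.2 = 1) ∨ (p.2 = 1 ∧ q.2 = 0))) ∨
    ((q.1 : ℕ) = ((p.1 : ℕ) + 1) % k ∧ p.2 = 0 ∧ q.2 = 1))

namespace DN
variable {m : ℕ}

lemma hval (a b : Fin (m+2)) : ((b:ℕ) = ((a:ℕ)+1) % (m+2)) ↔ b = a + 1 := by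
  rw [Fin.ext_iff, Fin.add_def]
  simp [eq_comm]

lemma adj_iff (p q : Fin (m+2) × Fin 4) :
    (diamondNecklace (m+2)).Adj p q ↔
      (p.1 = q.1 ∧ p.2 ≠ q.2 ∧ ¬(p.2 = 0 ∧ q.2 = 1) ∧ ¬(p.2 = 1 ∧ q.2 = 0)) ∨
      (q.1 = p.1 + 1 ∧ p.2 = 0 ∧ q.2 = 1) ∨
      (p.1 = q.1 + 1 ∧ q.2 = 0 ∧ p.2 = 1) := by
  rw [diamondNecklace, SimpleGraph.fromRel_adj]
  simp only [hval, not_or]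
  constructor
  · rintro ⟨hne, (⟨h1, h2, h3⟩ | ⟨h1, h2, h3⟩) | (⟨h1, h2, h3⟩ | ⟨h1, h2, h3⟩)⟩
    · exact Or.inl ⟨h1, fun h => hne (Prod.ext h1 h), h2, h3⟩
    · exact Or.inr (Or.inl ⟨h1, h2, h3⟩)
    · exact Or.inl ⟨h1.symm, fun h => hne (Prod.ext h1.symm h),
        fun ⟨e1, e2⟩ => h3 ⟨e2, e1⟩, fun ⟨e1, e2⟩ => h2 ⟨e2, e1⟩⟩
    · exact Or.inr (Or.inr ⟨h1, h2, h3⟩)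
  · rintro (⟨h1, h2, h3, h4⟩ | ⟨h1, h2, h3⟩ | ⟨h1, h2, h3⟩)
    · exact ⟨fun h => h2 (congrArg Prod.snd h), Or.inl (Or.inl ⟨h1, h3, h4⟩)⟩
    · refine ⟨fun h => ?_, Or.inl (Or.inr ⟨h1, h2, h3⟩)⟩
      rw [h, h3] at h2; simp at h2
    · refine ⟨fun h => ?_, Or.inr (Or.inr ⟨h1, h2, h3⟩)⟩
      rw [← h, h3] at h2; simp at h2


lemma adj_same (i : Fin (m+2)) {j j' : Fin 4} (h : j ≠ j')
    (h2 : ¬(j = 0 ∧ j' = 1)) (h3 : ¬(j = 1 ∧ j' = 0)) :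
    (diamondNecklace (m+2)).Adj (i, j) (i, j') :=
  (adj_iff _ _).mpr (Or.inl ⟨rfl, h, h2, h3⟩)

lemma adj_cross (i : Fin (m+2)) : (diamondNecklace (m+2)).Adj (i, 0) (i+1, 1) :=
  (adj_iff _ _).mpr (Or.inr (Or.inl ⟨rfl, rfl, rfl⟩))

lemma nbr_a (i : Fin (m+2)) (u : Fin (m+2) × Fin 4)
    (h : (diamondNecklace (m+2)).Adj (i, 0) u) :
    u = (i, 2) ∨ u = (i, 3) ∨ u = (i+1, 1) := by
  obtain ⟨u1, u2⟩ := u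
  rcases (adj_iff _ _).mp h with ⟨h1, h2, h3, h4⟩ | ⟨h1, h2, h3⟩ | ⟨h1, h2, h3⟩
  · simp only at h1 h2 h3 h4
    subst h1
    fin_cases u2 <;> simp_all
  · simp only at h1 h2 h3; subst h1; subst h3; exact Or.inr (Or.inr rfl)
  · simp at h3

lemma nbr_b (i : Fin (m+2)) (u : Fin (m+2) × Fin 4)
    (h : (diamondNecklace (m+2)).Adj (i, 1) u) :
    u = (i, 2) ∨ u = (i, 3) ∨ u = (i-1, 0) := by
  obtain ⟨u1, u2⟩ := u
  rcases (adj_iff _ _).mp h with ⟨h1, h2, h3, h4⟩ | ⟨h1, h2, h3⟩ | ⟨h1, h2, h3⟩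
  · simp only at h1 h2 h3 h4
    subst h1
    fin_cases u2 <;> simp_all
  · simp at h2
  · simp only at h1 h2 h3
    subst h2
    have : u1 = i - 1 := by rw [h1]; simp
    exact Or.inr (Or.inr (by rw [this]))

lemma nbr_c (i : Fin (m+2)) (u : Fin (m+2) × Fin 4)
    (h : (diamondNecklace (m+2)).Adj (i, 2) u) :
    u = (i, 0) ∨ u = (i, 1) ∨ u = (i, 3) := by
  obtain ⟨u1, u2⟩ := u
  rcases (adj_iff _ _).mp h with ⟨h1, h2, h3, h4⟩ | ⟨h1, h2, h3⟩ | ⟨h1, h2, h3⟩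
  · simp only at h1 h2 h3 h4
    subst h1
    fin_cases u2 <;> simp_all
  · simp at h2
  · simp at h3

lemma nbr_d (i : Fin (m+2)) (u : Fin (m+2) × Fin 4)
    (h : (diamondNecklace (m+2)).Adj (i, 3) u) :
    u = (i, 0) ∨ u = (i, 1) ∨ u = (i, 2) := by
  obtain ⟨u1, u2⟩ := u
  rcases (adj_iff _ _).mp h with ⟨h1, h2, h3, h4⟩ | ⟨h1, h2, h3⟩ | ⟨h1, h2, h3⟩
  · simp only at h1 h2 h3 h4
    subst h1
    fin_cases u2 <;> simp_all
  · simp at h2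
  · simp at h3

variable {T : Set (Fin (m+2) × Fin 4)}

lemma stepB (hcl : ForcingClosed (diamondNecklace (m+2)) T) (i : Fin (m+2))
    (h0 : (i-1, 0) ∈ T) (h1 : (i, 1) ∈ T) (h2 : (i, 2) ∈ T) : (i, 3) ∈ T := by
  refine hcl (i,1) h1 (i,3) (adj_same i (by decide) (by decide) (by decide)) ?_
  intro u hu hun
  rcases nbr_b i u hu with rfl | rfl | rfl
  · exact absurd h2 hun
  · rfl
  · exact absurd h0 hun

lemma stepA (hcl : ForcingClosed (diamondNecklace (m+2)) T) (i : Fin (m+2))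
    (h1 : (i, 1) ∈ T) (h2 : (i, 2) ∈ T) (h3 : (i, 3) ∈ T) : (i, 0) ∈ T := by
  refine hcl (i,2) h2 (i,0) (adj_same i (by decide) (by decide) (by decide)) ?_
  intro u hu hun
  rcases nbr_c i u hu with rfl | rfl | rfl
  · rfl
  · exact absurd h1 hun
  · exact absurd h3 hun

lemma stepC (hcl : ForcingClosed (diamondNecklace (m+2)) T) (i : Fin (m+2))
    (h0 : (i, 0) ∈ T) (h2 : (i, 2) ∈ T) (h3 : (i, 3) ∈ T) : (i+1, 1) ∈ T := by
  refine hcl (i,0) h0 (i+1,1) (adj_cross i) ?_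
  intro u hu hun
  rcases nbr_a i u hu with rfl | rfl | rfl
  · exact absurd h2 hun
  · exact absurd h3 hun
  · rfl

/-- The explicit total forcing set, as the range of an injective map. -/
def g (m : ℕ) : Fin (m+2) × Fin 2 → Fin (m+2) × Fin 4 :=
  fun p => (p.1, if p.2 = 0 then (if p.1 = 0 then 0 else if p.1 = 1 then 1 else 3) else 2)

lemma g_inj : Function.Injective (g m) := by
  rintro ⟨i, b⟩ ⟨i', b'⟩ h
  simp only [g, Prod.ext_iff] at h
  obtain ⟨h1, h2⟩ := h
  subst h1
  fin_cases b <;> fin_cases b' <;> simp_all <;> split_ifs at h2 <;> simp_all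

lemma mem_c (i : Fin (m+2)) : (i, (2:Fin 4)) ∈ Set.range (g m) := ⟨(i, 1), by simp [g]⟩

lemma mem_a0 : ((0 : Fin (m+2)), (0:Fin 4)) ∈ Set.range (g m) := ⟨(0, 0), by simp [g]⟩

lemma mem_b1 : ((1 : Fin (m+2)), (1:Fin 4)) ∈ Set.range (g m) :=
  ⟨(1, 0), by simp [g, (one_ne_zero : (1 : Fin (m+2)) ≠ 0)]⟩

open Fin.CommRing in
lemma S_forcing : IsForcingSet (diamondNecklace (m+2)) (Set.range (g m)) := by
  intro T hsub hcl
  have hc : ∀ i : Fin (m+2), (i, (2:Fin 4)) ∈ T := fun i => hsub (mem_c i)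
  have chain : ∀ n : ℕ, (((n : Fin (m+2))), (0:Fin 4)) ∈ T ∧
      ((1 + (n : Fin (m+2))), (1:Fin 4)) ∈ T := by
    intro n
    induction n with
    | zero => exact ⟨by simpa using hsub mem_a0, by simpa using hsub mem_b1⟩
    | succ n ih =>
      obtain ⟨h0, h1⟩ := ih
      set i : Fin (m+2) := 1 + (n : Fin (m+2)) with hi
      have him1 : i - 1 = (n : Fin (m+2)) := by rw [hi]; ring
      have h3 : (i, (3:Fin 4)) ∈ T := stepB hcl i (him1 ▸ h0) h1 (hc i)
      have h0' : (i, (0:Fin 4)) ∈ T := stepA hcl i h1 (hc i) h3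
      have h1' : (i+1, (1:Fin 4)) ∈ T := stepC hcl i h0' (hc i) h3
      constructor
      · have : ((n+1 : ℕ) : Fin (m+2)) = i := by push_cast; rw [hi]; ring
        rwa [this]
      · have : 1 + ((n+1 : ℕ) : Fin (m+2)) = i + 1 := by push_cast; rw [hi]; ring
        rwa [this]
  have h_a : ∀ i : Fin (m+2), (i, (0:Fin 4)) ∈ T := fun i => by
    have := (chain i.val).1
    rwa [Fin.cast_val_eq_self] at this
  have h_b : ∀ i : Fin (m+2), (i, (1:Fin 4)) ∈ T := fun i => by
    have := (chain (i-1).val).2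
    rw [Fin.cast_val_eq_self] at this
    rwa [show 1 + (i - 1) = i by ring] at this
  have h_d : ∀ i : Fin (m+2), (i, (3:Fin 4)) ∈ T := fun i =>
    stepB hcl i (h_a (i-1)) (h_b i) (hc i)
  rintro ⟨i, j⟩
  fin_cases j
  · exact h_a i
  · exact h_b i
  · exact hc i
  · exact h_d i

lemma S_total : IsTotalForcingSet (diamondNecklace (m+2)) (Set.range (g m)) := by
  refine ⟨S_forcing, ?_⟩
  rintro v ⟨⟨i, b⟩, rfl⟩
  fin_cases b
  · refine ⟨g m (i, 1), ⟨(i, 1), rfl⟩, ?_⟩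
    simp only [g]
    norm_num
    split_ifs <;> exact adj_same i (by decide) (by decide) (by decide)
  · refine ⟨g m (i, 0), ⟨(i, 0), rfl⟩, ?_⟩
    have : (diamondNecklace (m+2)).Adj (g m (i,0)) (g m (i,1)) := by
      simp only [g]
      norm_num
      split_ifs <;> exact adj_same i (by decide) (by decide) (by decide)
    have h2 : g m (i, 1) = (i, 2) := by simp [g]
    rw [h2] at this
    simpa [g] using this.symm

lemma S_ncard : (Set.range (g m)).ncard = 2 * (m+2) := by
  rw [← Nat.card_coe_set_eq, Nat.card_range_of_injective g_inj,
    Nat.card_eq_fintype_card]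
  simp [mul_comm]

lemma lower (S : Set (Fin (m+2) × Fin 4))
    (hS : IsTotalForcingSet (diamondNecklace (m+2)) S) : 2 * (m+2) ≤ S.ncard := by
  classical
  have hcd : ∀ i : Fin (m+2), (i, (2:Fin 4)) ∈ S ∨ (i, (3:Fin 4)) ∈ S := by
    intro i
    by_contra hcon
    push_neg at hcon
    obtain ⟨h2, h3⟩ := hcon
    set T : Set (Fin (m+2) × Fin 4) := {p | p ≠ (i, 2) ∧ p ≠ (i, 3)} with hT
    have hsub : S ⊆ T := fun p hp => ⟨fun e => h2 (e ▸ hp), fun e => h3 (e ▸ hp)⟩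
    have hclosed : ForcingClosed (diamondNecklace (m+2)) T := by
      intro v hv w hadj hall
      by_contra hw
      simp only [hT, Set.mem_setOf_eq, not_and_or, not_not] at hw
      rcases hw with rfl | rfl
      · rcases nbr_c i v hadj.symm with rfl | rfl | rfl
        · have := hall (i, 3) (adj_same i (by decide) (by decide) (by decide))
            (fun h => h.2 rfl)
          simp at this
        · have := hall (i, 3) (adj_same i (by decide) (by decide) (by decide))
            (fun h => h.2 rfl)
          simp at this
        · exact hv.2 rfl
      · rcases nbr_d i v hadj.symm with rfl | rfl | rfl
        · have := hall (i, 2) (adj_same i (by decide) (by decide) (by decide))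
            (fun h => h.1 rfl)
          simp at this
        · have := hall (i, 2) (adj_same i (by decide) (by decide) (by decide))
            (fun h => h.1 rfl)
          simp at this
        · exact hv.1 rfl
    exact (hS.1 T hsub hclosed (i, 2)).1 rfl
  have hfin : S.Finite := Set.toFinite S
  have key : ∀ i : Fin (m+2),
      2 ≤ (hfin.toFinset.filter (fun p => p.1 = i)).card := by
    intro i
    have main : ∀ x : Fin (m+2) × Fin 4, x ∈ S → x.1 = i →
        (x.2 = 2 ∨ x.2 = 3) → 2 ≤ (hfin.toFinset.filter (fun p => p.1 = i)).card := by
      rintro ⟨i', j⟩ hx h1 hj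
      simp only at h1 hj
      subst h1
      obtain ⟨y, hyS, hadj⟩ := hS.2 _ hx
      have hy1 : y.1 = i' := by
        rcases hj with rfl | rfl
        · rcases nbr_c i' y hadj with rfl | rfl | rfl <;> rfl
        · rcases nbr_d i' y hadj with rfl | rfl | rfl <;> rfl
      refine Finset.one_lt_card.mpr ⟨(i', j), ?_, y, ?_, ?_⟩
      · exact Finset.mem_filter.mpr ⟨hfin.mem_toFinset.mpr hx, rfl⟩
      · exact Finset.mem_filter.mpr ⟨hfin.mem_toFinset.mpr hyS, hy1⟩
      · exact fun h => hadj.ne h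
    rcases hcd i with h | h
    · exact main (i, 2) h rfl (Or.inl rfl)
    · exact main (i, 3) h rfl (Or.inr rfl)
  have hcard : hfin.toFinset.card =
      ∑ i : Fin (m+2), (hfin.toFinset.filter (fun p => p.1 = i)).card :=
    Finset.card_eq_sum_card_fiberwise (fun x _ => Finset.mem_univ x.1)
  have : 2 * (m+2) ≤ hfin.toFinset.card := by
    rw [hcard]
    calc 2 * (m+2) = ∑ _i : Fin (m+2), 2 := by simp [mul_comm]
    _ ≤ _ := Finset.sum_le_sum (fun i _ => key i)
  rwa [Set.ncard_eq_toFinset_card S hfin]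

end DN

/-- For every `k ≥ 2`, the diamond-necklace `N_k` has order `n = 4k` and satisfies
`F_t(N_k) = 2k = n/2`. -/
theorem totalForcingNumber_diamondNecklace (k : ℕ) (hk : 2 ≤ k) :
    Fintype.card (Fin k × Fin 4) = 4 * k ∧
    totalForcingNumber (diamondNecklace k) = 2 * k := by
  obtain ⟨m, rfl⟩ : ∃ m, k = m + 2 := ⟨k - 2, by omega⟩
  refine ⟨by simp; ring, ?_⟩
  have hmem : 2 * (m + 2) ∈
      {n : ℕ | ∃ S : Set (Fin (m+2) × Fin 4),
        IsTotalForcingSet (diamondNecklace (m+2)) S ∧ S.ncard = n} :=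
    ⟨Set.range (DN.g m), DN.S_total, DN.S_ncard⟩
  refine le_antisymm (Nat.sInf_le hmem) (le_csInf ⟨_, hmem⟩ ?_)
  rintro n ⟨S, hS, rfl⟩
  exact DN.lower S hS
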